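/- In a logic containing S5 axioms for K_α and [α] and the axiom schema K_α p → [α]p, the canonical relations satisfy the own-action condition: if w ≈_α u and w R_α v, then v ≈_α u. -/
import Mathlib


/-- Formulas of the language `L_KO`, with operators `□`, `[α]`, `K_α`,
`⊙[α]` (objective ought) and `⊙_S[α]` (subjective ought). -/
inductive Form (Ags : Type) : Type
  | atom : Nat → Form Ags
  | bot  : Form Ags
  | imp  : Form Ags → Form Ags → Form Ags
  | box  : Form Ags → Form Ags
  | act  : Ags → Form Ags → Form Ags
  | know : Ags → Form Ags → Form Ags
  | obj  : Ags → Form Ags → Form Ags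
  | subj : Ags → Form Ags → Form Ags

namespace Form

variable {Ags : Type}

def neg (φ : Form Ags) : Form Ags := imp φ bot
def dia (φ : Form Ags) : Form Ags := neg (box (neg φ))
def conj (φ ψ : Form Ags) : Form Ags := neg (imp φ (neg ψ))
def disj (φ ψ : Form Ags) : Form Ags := imp (neg φ) ψ
def conjl : List (Form Ags) → Form Ags
  | [] => neg bot
  | φ :: l => conj φ (conjl l)

end Form

open Form

/-- The Hilbert-style proof system `Λ`. -/
inductive Prov {Ags : Type} : Form Ags → Prop
  | pl1 (φ ψ : Form Ags) : Prov (imp φ (imp ψ φ))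
  | pl2 (φ ψ χ : Form Ags) :
      Prov (imp (imp φ (imp ψ χ)) (imp (imp φ ψ) (imp φ χ)))
  | pl3 (φ ψ : Form Ags) : Prov (imp (imp (neg φ) (neg ψ)) (imp ψ φ))
  | mp {φ ψ : Form Ags} : Prov (imp φ ψ) → Prov φ → Prov ψ
  -- S5 axioms and necessitation for □
  | boxK (φ ψ : Form Ags) : Prov (imp (box (imp φ ψ)) (imp (box φ) (box ψ)))
  | boxT (φ : Form Ags) : Prov (imp (box φ) φ)
  | box4 (φ : Form Ags) : Prov (imp (box φ) (box (box φ)))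
  | box5 (φ : Form Ags) : Prov (imp (dia φ) (box (dia φ)))
  | boxNec {φ : Form Ags} : Prov φ → Prov (box φ)
  -- S5 axioms and necessitation for [α]
  | actK (a : Ags) (φ ψ : Form Ags) :
      Prov (imp (act a (imp φ ψ)) (imp (act a φ) (act a ψ)))
  | actT (a : Ags) (φ : Form Ags) : Prov (imp (act a φ) φ)
  | act4 (a : Ags) (φ : Form Ags) : Prov (imp (act a φ) (act a (act a φ)))
  | act5 (a : Ags) (φ : Form Ags) :
      Prov (imp (neg (act a φ)) (act a (neg (act a φ))))
  | actNec {φ : Form Ags} (a : Ags) : Prov φ → Prov (act a φ)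
  -- S5 axioms and necessitation for K_α
  | knowK (a : Ags) (φ ψ : Form Ags) :
      Prov (imp (know a (imp φ ψ)) (imp (know a φ) (know a ψ)))
  | knowT (a : Ags) (φ : Form Ags) : Prov (imp (know a φ) φ)
  | know4 (a : Ags) (φ : Form Ags) : Prov (imp (know a φ) (know a (know a φ)))
  | know5 (a : Ags) (φ : Form Ags) :
      Prov (imp (neg (know a φ)) (know a (neg (know a φ))))
  | knowNec {φ : Form Ags} (a : Ags) : Prov φ → Prov (know a φ)
  -- deontic-epistemic axioms
  | a1 (a : Ags) (φ ψ : Form Ags) :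
      Prov (imp (obj a (imp φ ψ)) (imp (obj a φ) (obj a ψ)))
  | a2 (a : Ags) (φ : Form Ags) :
      Prov (imp (box φ) (conj (act a φ) (obj a φ)))
  | a3 (a : Ags) (φ : Form Ags) :
      Prov (disj (box (obj a φ)) (box (neg (obj a φ))))
  | a4 (a : Ags) (φ : Form Ags) : Prov (imp (obj a φ) (obj a (act a φ)))
  | oic (a : Ags) (φ : Form Ags) : Prov (imp (obj a φ) (dia (act a φ)))
  | ia (l : List (Ags × Form Ags)) (h : l.Pairwise fun p q => p.1 ≠ q.1) :
      Prov (imp (conjl (l.map fun p => dia (act p.1 p.2)))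
                (dia (conjl (l.map fun p => act p.1 p.2))))
  | a5 (a : Ags) (φ ψ : Form Ags) :
      Prov (imp (subj a (imp φ ψ)) (imp (subj a φ) (subj a ψ)))
  | a6 (a : Ags) (φ : Form Ags) : Prov (imp (subj a φ) (subj a (know a φ)))
  | oacAx (a : Ags) (φ : Form Ags) : Prov (imp (know a φ) (act a φ))
  | unifH (a : Ags) (φ : Form Ags) :
      Prov (imp (dia (know a φ)) (know a (dia φ)))
  | sN (a : Ags) (φ : Form Ags) : Prov (imp (know a (box φ)) (subj a φ))
  | sOic (a : Ags) (φ : Form Ags) : Prov (imp (subj a φ) (dia (know a φ)))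
  | clAx (a : Ags) (φ : Form Ags) :
      Prov (imp (subj a φ) (know a (box (subj a φ))))
  | objNec {φ : Form Ags} (a : Ags) : Prov φ → Prov (obj a φ)
  | subjNec {φ : Form Ags} (a : Ags) : Prov φ → Prov (subj a φ)

/-- `Λ`-consistency of a set of formulas. -/
def Consistent {Ags : Type} (Γ : Set (Form Ags)) : Prop :=
  ¬ ∃ l : List (Form Ags), (∀ φ ∈ l, φ ∈ Γ) ∧ Prov (imp (conjl l) bot)

/-- Maximal `Λ`-consistent set. -/
def MCS {Ags : Type} (w : Set (Form Ags)) : Prop :=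
  Consistent w ∧ ∀ φ : Form Ags, φ ∈ w ∨ neg φ ∈ w

/-- Canonical relation for `□`. -/
def RboxC {Ags : Type} (w v : Set (Form Ags)) : Prop :=
  ∀ φ : Form Ags, box φ ∈ w → φ ∈ v

/-- Canonical relation for `[α]`. -/
def RactC {Ags : Type} (a : Ags) (w v : Set (Form Ags)) : Prop :=
  ∀ φ : Form Ags, act a φ ∈ w → φ ∈ v

/-- Canonical relation for `K_α`. -/
def RknowC {Ags : Type} (a : Ags) (w v : Set (Form Ags)) : Prop :=
  ∀ φ : Form Ags, know a φ ∈ w → φ ∈ v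

/-- `Σ_α^w = {[α]φ : ⊙[α]φ ∈ w}`. -/
def SigmaSet {Ags : Type} (a : Ags) (w : Set (Form Ags)) : Set (Form Ags) :=
  {ψ | ∃ φ, ψ = act a φ ∧ obj a φ ∈ w}

/-- `Γ_α^w = {K_αφ : ⊙_S[α]φ ∈ w}`. -/
def GammaSet {Ags : Type} (a : Ags) (w : Set (Form Ags)) : Set (Form Ags) :=
  {ψ | ∃ φ, ψ = know a φ ∧ subj a φ ∈ w}

/-- `v ∈ α_k[w]`: the canonical relation of the composite operator `K_α□`. -/
def alphak {Ags : Type} (a : Ags) (w v : Set (Form Ags)) : Prop :=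
  ∀ φ : Form Ags, know a (box φ) ∈ w → φ ∈ v

namespace MyAux

variable {Ags : Type}

theorem imp_id (φ : Form Ags) : Prov (imp φ φ) :=
  Prov.mp (Prov.mp (Prov.pl2 φ (imp φ φ) φ) (Prov.pl1 φ (imp φ φ))) (Prov.pl1 φ φ)

theorem imp_trans {φ ψ χ : Form Ags} (h1 : Prov (imp φ ψ)) (h2 : Prov (imp ψ χ)) :
    Prov (imp φ χ) :=
  Prov.mp (Prov.mp (Prov.pl2 φ ψ χ) (Prov.mp (Prov.pl1 (imp ψ χ) φ) h2)) h1

theorem swap {φ ψ χ : Form Ags} (h : Prov (imp φ (imp ψ χ))) :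
    Prov (imp ψ (imp φ χ)) :=
  imp_trans (Prov.pl1 ψ φ) (Prov.mp (Prov.pl2 φ ψ χ) h)

theorem dni (φ : Form Ags) : Prov (imp φ (neg (neg φ))) :=
  swap (imp_id (neg φ))

theorem exfalso (φ : Form Ags) : Prov (imp bot φ) :=
  Prov.mp (Prov.pl3 φ bot) (Prov.mp (Prov.pl1 (imp bot bot) (neg φ)) (imp_id bot))

theorem conj_elim1 (φ ψ : Form Ags) : Prov (imp (conj φ ψ) φ) := by
  have h1 : Prov (imp (neg φ) (imp φ (neg ψ))) := by
    have ha : Prov (imp φ (imp bot (neg ψ))) :=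
      Prov.mp (Prov.pl1 (imp bot (neg ψ)) φ) (exfalso (neg ψ))
    exact Prov.mp (Prov.pl2 φ bot (neg ψ)) ha
  have h2 : Prov (imp (neg φ) (neg (neg (imp φ (neg ψ))))) :=
    imp_trans h1 (dni (imp φ (neg ψ)))
  exact Prov.mp (Prov.pl3 φ (neg (imp φ (neg ψ)))) h2

theorem conj_elim2 (φ ψ : Form Ags) : Prov (imp (conj φ ψ) ψ) := by
  have h1 : Prov (imp (neg ψ) (imp φ (neg ψ))) := Prov.pl1 (neg ψ) φ
  have h2 : Prov (imp (neg ψ) (neg (neg (imp φ (neg ψ))))) :=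
    imp_trans h1 (dni (imp φ (neg ψ)))
  exact Prov.mp (Prov.pl3 ψ (neg (imp φ (neg ψ)))) h2

/-- From `⊢ φ → ψ`, the list `[φ, ¬ψ]` is inconsistent. -/
theorem pair_incons {φ ψ : Form Ags} (h : Prov (imp φ ψ)) :
    Prov (imp (conjl [φ, neg ψ]) bot) := by
  have c1 : Prov (imp (conjl [φ, neg ψ]) φ) := conj_elim1 φ _
  have c2 : Prov (imp (conjl [φ, neg ψ]) (neg ψ)) :=
    imp_trans (conj_elim2 φ _) (conj_elim1 (neg ψ) _)
  have cψ : Prov (imp (conjl [φ, neg ψ]) ψ) := imp_trans c1 h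
  exact Prov.mp (Prov.mp (Prov.pl2 (conjl [φ, neg ψ]) ψ bot) c2) cψ

theorem mcs_mp {w : Set (Form Ags)} (hw : MCS w) {φ ψ : Form Ags}
    (h : Prov (imp φ ψ)) (hφ : φ ∈ w) : ψ ∈ w := by
  rcases hw.2 ψ with hψ | hnψ
  · exact hψ
  · exact absurd ⟨[φ, neg ψ], by
      refine ⟨?_, pair_incons h⟩
      intro χ hχ
      simp only [List.mem_cons, List.not_mem_nil, or_false] at hχ
      rcases hχ with rfl | rfl
      · exact hφ
      · exact hnψ⟩ hw.1

theorem mcs_not_both {w : Set (Form Ags)} (hw : MCS w) {φ : Form Ags}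
    (h1 : φ ∈ w) (h2 : neg φ ∈ w) : False := by
  exact hw.1 ⟨[φ, neg φ], by
    refine ⟨?_, pair_incons (imp_id φ)⟩
    intro χ hχ
    simp only [List.mem_cons, List.not_mem_nil, or_false] at hχ
    rcases hχ with rfl | rfl
    · exact h1
    · exact h2⟩

end MyAux

/-- Canonical own-action condition: if `w ≈_α u` and `w R_α v`, then `v ≈_α u`. -/
theorem statement9 {Ags : Type} (a : Ags) (w u v : Set (Form Ags))
    (hw : MCS w) (hu : MCS u) (hv : MCS v)
    (h1 : RknowC a w u) (h2 : RactC a w v) : RknowC a v u := by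
  intro φ hkv
  rcases hw.2 (know a φ) with hk | hnk
  · exact h1 φ hk
  · exfalso
    have h5 : know a (neg (know a φ)) ∈ w :=
      MyAux.mcs_mp hw (Prov.know5 a φ) hnk
    have hact : act a (neg (know a φ)) ∈ w :=
      MyAux.mcs_mp hw (Prov.oacAx a (neg (know a φ))) h5
    have hnv : neg (know a φ) ∈ v := h2 _ hact
    exact MyAux.mcs_not_both hv hkv hnv
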